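/- Let σ and τ be two permutations of a finite set with k elements. Then c(σ) + c(τ) ≤ k + c(στ), where c(ρ) denotes the number of cycles of the permutation ρ. -/

import Mathlib

/-- The setoid on `α` whose classes are the cycles (orbits) of the permutation `σ`:
`x ≈ y` iff `y = σ^i x` for some integer `i`. -/
def Equiv.Perm.sameCycleSetoid {α : Type*} (σ : Equiv.Perm α) : Setoid α :=
  ⟨σ.SameCycle,
    ⟨fun x => Equiv.Perm.SameCycle.refl σ x, fun h => h.symm, fun h h' => h.trans h'⟩⟩

/-- The number of cycles of a permutation of a finite set: the number of orbits of the
action of the cyclic group generated by it (fixed points count as cycles). -/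
noncomputable def Equiv.Perm.cycleCount {α : Type*} (σ : Equiv.Perm α) : ℕ :=
  Nat.card (Quotient σ.sameCycleSetoid)

section Aux
variable {α : Type*}

/-- Permutations all of whose steps stay within `s`-classes form a subgroup. -/
def stepSubgroup (s : Setoid α) : Subgroup (Equiv.Perm α) where
  carrier := {g | ∀ x, s.r x (g x)}
  one_mem' := fun x => s.refl' x
  mul_mem' := by
    intro g h hg hh x
    exact s.trans' (hh x) (hg (h x))
  inv_mem' := by
    intro g hg x
    have := hg (g⁻¹ x)
    simp only [Equiv.Perm.inv_def, Equiv.apply_symm_apply] at this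
    exact s.symm' this

lemma orbit_le (s : Setoid α) (π : Equiv.Perm α) (h : ∀ x, s.r x (π x)) :
    ∀ {x y}, π.SameCycle x y → s.r x y := by
  rintro x y ⟨i, rfl⟩
  have : π ^ i ∈ stepSubgroup s := zpow_mem (show π ∈ stepSubgroup s from h) i
  exact this x

/-- The setoid obtained from `s` by additionally identifying `a` and `b`. -/
def joinPair (s : Setoid α) (a b : α) : Setoid α :=
  Relation.EqvGen.setoid (fun u v => s.r u v ∨ (u = a ∧ v = b))

lemma joinPair_le (s : Setoid α) (a b : α) : s ≤ joinPair s a b := by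
  intro u v h
  exact Relation.EqvGen.rel _ _ (Or.inl h)

lemma joinPair_rel (s : Setoid α) (a b : α) : (joinPair s a b).r a b :=
  Relation.EqvGen.rel _ _ (Or.inr ⟨rfl, rfl⟩)

lemma joinPair_cases (s : Setoid α) (a b : α) {u v : α} (h : (joinPair s a b).r u v) :
    s.r u v ∨ (s.r u a ∧ s.r b v) ∨ (s.r u b ∧ s.r a v) := by
  change Relation.EqvGen _ u v at h
  induction h with
  | rel x y hxy =>
    rcases hxy with h | ⟨rfl, rfl⟩
    · exact Or.inl h
    · exact Or.inr (Or.inl ⟨s.refl' _, s.refl' _⟩)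
  | refl x => exact Or.inl (s.refl' x)
  | symm x y _ ih =>
    rcases ih with h | ⟨h1, h2⟩ | ⟨h1, h2⟩
    · exact Or.inl (s.symm' h)
    · exact Or.inr (Or.inr ⟨s.symm' h2, s.symm' h1⟩)
    · exact Or.inr (Or.inl ⟨s.symm' h2, s.symm' h1⟩)
  | trans x y z _ _ ih1 ih2 =>
    rcases ih1 with h | ⟨h1, h2⟩ | ⟨h1, h2⟩ <;>
      rcases ih2 with h' | ⟨h1', h2'⟩ | ⟨h1', h2'⟩
    · exact Or.inl (s.trans' h h')
    · exact Or.inr (Or.inl ⟨s.trans' h h1', h2'⟩)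
    · exact Or.inr (Or.inr ⟨s.trans' h h1', h2'⟩)
    · exact Or.inr (Or.inl ⟨h1, s.trans' h2 h'⟩)
    · exact Or.inr (Or.inl ⟨h1, h2'⟩)
    · exact Or.inl (s.trans' h1 h2')
    · exact Or.inr (Or.inr ⟨h1, s.trans' h2 h'⟩)
    · exact Or.inl (s.trans' h1 h2')
    · exact Or.inr (Or.inr ⟨h1, h2'⟩)

variable [Finite α]

/-- Coarser setoid has at most as many classes. -/
lemma card_quot_le_of_le {s s' : Setoid α} (hle : s ≤ s') :
    Nat.card (Quotient s') ≤ Nat.card (Quotient s) := by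
  refine Nat.card_le_card_of_surjective
    (Quotient.lift (fun u => Quotient.mk s' u) (fun u v h => Quot.sound (hle h))) ?_
  intro q
  induction q using Quotient.ind with
  | _ u => exact ⟨Quotient.mk s u, rfl⟩

/-- Adding one identification to a setoid decreases the number of classes by at most one. -/
lemma card_quot_le_joinPair (s : Setoid α) (a b : α) :
    Nat.card (Quotient s) ≤ Nat.card (Quotient (joinPair s a b)) + 1 := by
  classical
  let J := joinPair s a b
  let m : Quotient s → Quotient J :=
    Quotient.lift (fun u => Quotient.mk J u) (fun u v h => Quot.sound (joinPair_le s a b h))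
  let g : Quotient s → Option (Quotient J) :=
    fun x => if x = Quotient.mk s b then none else some (m x)
  have hg : Function.Injective g := by
    intro x y hxy
    induction x using Quotient.ind with
    | _ u =>
    induction y using Quotient.ind with
    | _ v =>
    simp only [g] at hxy
    by_cases h1 : Quotient.mk s u = Quotient.mk s b <;>
      by_cases h2 : Quotient.mk s v = Quotient.mk s b
    · exact h1.trans h2.symm
    · rw [if_pos h1, if_neg h2] at hxy; cases hxy
    · rw [if_neg h1, if_pos h2] at hxy; cases hxy
    · rw [if_neg h1, if_neg h2, Option.some_inj] at hxy
      have : J.r u v := Quotient.exact hxy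
      rcases joinPair_cases s a b this with h | ⟨ha, hb⟩ | ⟨ha, hb⟩
      · exact Quot.sound h
      · exact absurd (Quot.sound (s.symm' hb) : Quotient.mk s v = Quotient.mk s b) h2
      · exact absurd (Quot.sound ha : Quotient.mk s u = Quotient.mk s b) h1
  haveI hfin : Finite (Quotient J) := Quotient.finite J
  haveI := Fintype.ofFinite (Quotient J)
  calc Nat.card (Quotient s) ≤ Nat.card (Option (Quotient J)) :=
        Nat.card_le_card_of_injective g hg
    _ = Nat.card (Quotient J) + 1 := Finite.card_option

open Equiv.Perm in
lemma step_swap [DecidableEq α] (s : Setoid α) (a b z : α) : (joinPair s a b).r z (Equiv.swap a b z) := by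
  rcases eq_or_ne z a with rfl | hza
  · rw [Equiv.swap_apply_left]; exact joinPair_rel s z b
  rcases eq_or_ne z b with rfl | hzb
  · rw [Equiv.swap_apply_right]; exact (joinPair s a z).symm' (joinPair_rel s a z)
  · rw [Equiv.swap_apply_of_ne_of_ne hza hzb]

lemma sameCycle_setoid_step (σ : Equiv.Perm α) (s : Setoid α) (h : σ.sameCycleSetoid ≤ s) (x : α) :
    s.r x (σ x) := h ⟨1, by simp⟩

/-- Core estimate: if every step of `π` stays within classes of the setoid obtained
from the cycles of `σ` by one extra identification, then `π` has at most one cycle fewer. -/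
lemma core_le (σ π : Equiv.Perm α) (a b : α)
    (h : ∀ x, (joinPair σ.sameCycleSetoid a b).r x (π x)) :
    σ.cycleCount ≤ π.cycleCount + 1 := by
  have h1 : π.sameCycleSetoid ≤ joinPair σ.sameCycleSetoid a b := by
    intro u v huv
    exact orbit_le _ π h huv
  calc σ.cycleCount ≤ Nat.card (Quotient (joinPair σ.sameCycleSetoid a b)) + 1 :=
        card_quot_le_joinPair _ a b
    _ ≤ π.cycleCount + 1 := Nat.add_le_add_right (card_quot_le_of_le h1) 1

lemma mul_swap_le [DecidableEq α] (σ : Equiv.Perm α) (a b : α) :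
    σ.cycleCount ≤ (σ * Equiv.swap a b).cycleCount + 1 := by
  refine core_le σ _ a b (fun x => ?_)
  have h1 := step_swap σ.sameCycleSetoid a b x
  have h2 : (joinPair σ.sameCycleSetoid a b).r (Equiv.swap a b x) (σ (Equiv.swap a b x)) :=
    sameCycle_setoid_step σ _ (joinPair_le _ a b) _
  exact (joinPair σ.sameCycleSetoid a b).trans' h1 h2

/-- Splitting a cycle: multiplying on the left by `swap x (τ x)` (with `τ x ≠ x`)
strictly increases the number of cycles. -/
lemma split_lt [DecidableEq α] (τ : Equiv.Perm α) {x : α} (hx : τ x ≠ x) :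
    τ.cycleCount + 1 ≤ (Equiv.swap x (τ x) * τ).cycleCount := by
  set τ' := Equiv.swap x (τ x) * τ with hτ'
  have hfix : τ' x = x := by
    simp [hτ', Equiv.swap_apply_right]
  have hle : τ'.sameCycleSetoid ≤ τ.sameCycleSetoid := by
    intro u v huv
    refine orbit_le τ.sameCycleSetoid τ' (fun z => ?_) huv
    show τ.SameCycle z (τ' z)
    have hz : τ.SameCycle z (τ z) := ⟨1, by simp⟩
    have hstep : τ.SameCycle (τ z) (Equiv.swap x (τ x) (τ z)) := by
      rcases eq_or_ne (τ z) x with h | h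
      · rw [h, Equiv.swap_apply_left]; exact ⟨1, by simp⟩
      rcases eq_or_ne (τ z) (τ x) with h2 | h2
      · rw [h2, Equiv.swap_apply_right]
        exact (show τ.SameCycle x (τ x) from ⟨1, by simp⟩).symm
      · rw [Equiv.swap_apply_of_ne_of_ne h h2]
    exact hz.trans hstep
  let q : Quotient τ'.sameCycleSetoid → Quotient τ.sameCycleSetoid :=
    Quotient.lift (fun u => Quotient.mk τ.sameCycleSetoid u) (fun u v h => Quot.sound (hle h))
  have hqsurj : Function.Surjective q := by
    intro w
    induction w using Quotient.ind with
    | _ u => exact ⟨Quotient.mk τ'.sameCycleSetoid u, rfl⟩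
  have hqnoninj : ¬ Function.Injective q := by
    intro hinj
    have hcls : Quotient.mk τ'.sameCycleSetoid x = Quotient.mk τ'.sameCycleSetoid (τ x) :=
      hinj (Quot.sound (⟨1, by simp⟩ : τ.SameCycle x (τ x)))
    have hsc : τ'.SameCycle x (τ x) := Quotient.exact hcls
    obtain ⟨i, hi⟩ := hsc
    rw [Equiv.Perm.zpow_apply_eq_self_of_apply_eq_self hfix i] at hi
    exact hx hi.symm
  by_contra hcon
  push_neg at hcon
  have hcard : Nat.card (Quotient τ'.sameCycleSetoid) ≤ Nat.card (Quotient τ.sameCycleSetoid) :=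
    Nat.le_of_lt_succ hcon
  exact hqnoninj (hqsurj.bijective_of_nat_card_le hcard).injective

lemma cycleCount_one : (1 : Equiv.Perm α).cycleCount = Nat.card α := by
  refine (Nat.card_eq_of_bijective (Quotient.mk (1 : Equiv.Perm α).sameCycleSetoid) ⟨?_, ?_⟩).symm
  · intro u v huv
    have : (1 : Equiv.Perm α).SameCycle u v := Quotient.exact huv
    simpa using this
  · intro w
    induction w using Quotient.ind with
    | _ u => exact ⟨u, rfl⟩

/-- Any permutation is a product of swaps whose number, plus the cycle count, is at most
the cardinality of the underlying type. -/
lemma decomp [Fintype α] [DecidableEq α] :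
    ∀ (n : ℕ) (τ : Equiv.Perm α), τ.support.card ≤ n →
      ∃ l : List (Equiv.Perm α), l.prod = τ ∧ (∀ t ∈ l, ∃ a b : α, t = Equiv.swap a b) ∧
        τ.cycleCount + l.length ≤ Nat.card α := by
  intro n
  induction n with
  | zero =>
    intro τ hτ
    have : τ = 1 := by
      rw [← Equiv.Perm.support_eq_empty_iff]
      exact Finset.card_eq_zero.mp (Nat.le_zero.mp hτ)
    subst this
    exact ⟨[], by simp, by simp, by simp [cycleCount_one]⟩
  | succ n ih =>
    intro τ hτ
    rcases eq_or_ne τ 1 with rfl | hτ1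
    · exact ⟨[], by simp, by simp, by simp [cycleCount_one]⟩
    · obtain ⟨x, hx⟩ : ∃ x, τ x ≠ x := by
        by_contra hc
        push_neg at hc
        exact hτ1 (Equiv.ext hc)
      set τ'' := Equiv.swap x (τ x) * τ with hτ''
      have hlt : τ''.support.card < τ.support.card := Equiv.Perm.card_support_swap_mul hx
      obtain ⟨l', hl'prod, hl'swap, hl'len⟩ := ih τ'' (by omega)
      refine ⟨Equiv.swap x (τ x) :: l', ?_, ?_, ?_⟩
      · rw [List.prod_cons, hl'prod, hτ'', Equiv.swap_mul_self_mul]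
      · intro t ht
        rcases List.mem_cons.mp ht with rfl | ht
        · exact ⟨x, τ x, rfl⟩
        · exact hl'swap t ht
      · have hsplit := split_lt τ hx
        rw [← hτ''] at hsplit
        simp only [List.length_cons]
        omega

lemma list_le [DecidableEq α] :
    ∀ (l : List (Equiv.Perm α)) (σ : Equiv.Perm α),
      (∀ t ∈ l, ∃ a b : α, t = Equiv.swap a b) →
      σ.cycleCount ≤ (σ * l.prod).cycleCount + l.length := by
  intro l
  induction l with
  | nil => intro σ _; simp
  | cons t l' ih =>
    intro σ hsw
    obtain ⟨a, b, rfl⟩ := hsw t (List.mem_cons_self (a := t) (l := l'))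
    have h1 := mul_swap_le σ a b
    have h2 := ih (σ * Equiv.swap a b) (fun t ht => hsw t (List.mem_cons_of_mem _ ht))
    rw [List.prod_cons, ← mul_assoc]
    simp only [List.length_cons]
    omega


end Aux

/-- **Subadditivity of the cycle defect** (Lemma `permutationinequalitylemma`):
for permutations `σ, τ` of a finite set with `k` elements,
`c(σ) + c(τ) ≤ k + c(στ)`, where `c` is the number of cycles. -/
theorem cycleCount_add_cycleCount_le {α : Type*} [Fintype α] (k : ℕ)
    (hk : Fintype.card α = k) (σ τ : Equiv.Perm α) :
    σ.cycleCount + τ.cycleCount ≤ k + (σ * τ).cycleCount := by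
  classical
  obtain ⟨l, hlprod, hlswap, hllen⟩ := decomp τ.support.card τ le_rfl
  have h1 := list_le l σ hlswap
  rw [hlprod] at h1
  rw [Nat.card_eq_fintype_card, hk] at hllen
  omega
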